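/- Define δ_m(x) := cos(πx) − P_m(x) and δ_m*(x) := π^{2m+2}(1/4 − x²)^{m+1}/(2m+2)!. Then δ_m(x) ∼ δ_m*(x) as m → ∞, uniformly in x ∈ (−1/2, 1/2): for every ε > 0 there is an M such that for all natural m ≥ M and all real x with −1/2 < x < 1/2, |δ_m(x) − δ_m*(x)| ≤ ε · δ_m*(x). -/

import Mathlib

open Real

/-- The summand `a_{j,k} = (-π²/4)^k / (2j+2k)! · C(j+k, j)`. -/
noncomputable def a (j k : ℕ) : ℝ :=
  (-(π ^ 2) / 4) ^ k / (Nat.factorial (2 * j + 2 * k)) * (Nat.choose (j + k) j)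

/-- `t_j = Σ_{k=0}^∞ a_{j,k}`. -/
noncomputable def t (j : ℕ) : ℝ := ∑' k : ℕ, a j k

/-- `P_m(x) = Σ_{j=1}^m t_j π^{2j} (1/4 − x²)^j`. -/
noncomputable def P (m : ℕ) (x : ℝ) : ℝ :=
  ∑ j ∈ Finset.Icc 1 m, t j * π ^ (2 * j) * (1 / 4 - x ^ 2) ^ j


lemma key_fact (j k : ℕ) :
    Nat.choose (j + k) k * (2 * j).factorial * (2 * j + 1) ^ k ≤ (2 * j + 2 * k).factorial := by
  induction k with
  | zero => simp
  | succ k ih =>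
    have h1 : (j + (k+1)).choose (k+1) ≤ (j + k + 1) * (j + k).choose k := by
      have := Nat.add_one_mul_choose_eq (j + k) k
      calc (j + (k+1)).choose (k+1) ≤ (j + (k+1)).choose (k+1) * (k+1) := by
            nlinarith [Nat.choose_pos (show k+1 ≤ j + (k+1) by omega)]
        _ = (j + k + 1) * (j + k).choose k := by
            rw [show j + (k+1) = (j+k)+1 from rfl]
            rw [Nat.add_one_mul_choose_eq]
    have h2 : (2*j + 2*(k+1)).factorial = (2*j+2*k+2) * ((2*j+2*k+1) * (2*j+2*k).factorial) := by
      rw [show 2*j + 2*(k+1) = (2*j+2*k+1)+1 by ring]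
      rw [Nat.factorial_succ, Nat.factorial_succ]
    calc (j + (k+1)).choose (k+1) * (2*j).factorial * (2*j+1)^(k+1)
        ≤ ((j + k + 1) * (j + k).choose k) * (2*j).factorial * ((2*j+1)^k * (2*j+1)) := by
          rw [pow_succ]
          exact Nat.mul_le_mul (Nat.mul_le_mul_right _ h1) le_rfl
      _ = ((j+k+1) * (2*j+1)) * ((j + k).choose k * (2*j).factorial * (2*j+1)^k) := by ring
      _ ≤ ((2*j+2*k+2) * (2*j+2*k+1)) * (2*j+2*k).factorial := by
          exact Nat.mul_le_mul (Nat.mul_le_mul (by omega) (by omega)) ih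
      _ = (2*j + 2*(k+1)).factorial := by rw [h2]; ring

lemma choose_symm' (j k : ℕ) : Nat.choose (j+k) j = Nat.choose (j+k) k := by
  have := Nat.choose_symm (show j ≤ j + k by omega)
  simpa using this.symm

lemma abs_a_le (j k : ℕ) :
    |a j k| ≤ (1 / (Nat.factorial (2*j))) * (π^2 / (4*(2*j+1)))^k := by
  have hF : (0:ℝ) < (Nat.factorial (2*j+2*k) : ℝ) := by positivity
  have habs : |a j k| = (π^2/4)^k / (Nat.factorial (2*j+2*k)) * (Nat.choose (j+k) j) := by
    unfold a
    rw [abs_mul, abs_div, abs_pow, abs_div]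
    simp [abs_of_nonneg, sq_nonneg, Nat.cast_nonneg, abs_of_nonneg (show (0:ℝ) ≤ π^2 by positivity)]
  rw [habs, choose_symm']
  have hkey : (Nat.choose (j+k) k : ℝ) * (Nat.factorial (2*j)) * (2*j+1)^k
      ≤ (Nat.factorial (2*j+2*k)) := by exact_mod_cast key_fact j k
  have h1 : (Nat.choose (j+k) k : ℝ) / (Nat.factorial (2*j+2*k))
      ≤ 1 / ((Nat.factorial (2*j)) * (2*j+1)^k) := by
    rw [div_le_div_iff₀ hF (by positivity)]
    nlinarith
  calc (π^2/4)^k / (Nat.factorial (2*j+2*k)) * (Nat.choose (j+k) k)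
      = (π^2/4)^k * ((Nat.choose (j+k) k : ℝ) / (Nat.factorial (2*j+2*k))) := by ring
    _ ≤ (π^2/4)^k * (1 / ((Nat.factorial (2*j)) * (2*j+1)^k)) := by
        exact mul_le_mul_of_nonneg_left h1 (by positivity)
    _ = (1 / (Nat.factorial (2*j))) * (π^2 / (4*(2*j+1)))^k := by
        rw [div_pow, div_pow, mul_pow]
        field_simp

lemma abs_a_le' (j k : ℕ) : |a j k| ≤ (π^2/4)^k / (Nat.factorial k) := by
  have hkey : (Nat.choose (j+k) k) * Nat.factorial k ≤ Nat.factorial (2*j+2*k) := by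
    calc (Nat.choose (j+k) k) * Nat.factorial k
        ≤ (Nat.choose (j+k) k) * Nat.factorial k * Nat.factorial (j+k-k) :=
          Nat.le_mul_of_pos_right _ (Nat.factorial_pos _)
      _ = Nat.factorial (j+k) := Nat.choose_mul_factorial_mul_factorial (Nat.le_add_left k j)
      _ ≤ Nat.factorial (2*j+2*k) := Nat.factorial_le (by omega)
  have hkeyR : (Nat.choose (j+k) k : ℝ) * Nat.factorial k ≤ Nat.factorial (2*j+2*k) := by
    exact_mod_cast hkey
  have hF : (0:ℝ) < (Nat.factorial (2*j+2*k) : ℝ) := by positivity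
  have habs : |a j k| = (π^2/4)^k / (Nat.factorial (2*j+2*k)) * (Nat.choose (j+k) k) := by
    unfold a
    rw [choose_symm', abs_mul, abs_div, abs_pow, abs_div]
    simp [abs_of_nonneg (show (0:ℝ) ≤ π^2 by positivity)]
  rw [habs]
  rw [div_mul_eq_mul_div, div_le_div_iff₀ hF (by positivity)]
  have : (0:ℝ) ≤ (π^2/4)^k := by positivity
  nlinarith
lemma summable_a (j : ℕ) : Summable (a j) := by
  apply Summable.of_norm_bounded (Real.summable_pow_div_factorial (π^2/4))
  intro k; exact abs_a_le' j k

lemma t_zero : t 0 = 0 := by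
  have : t 0 = Real.cos (π/2) := by
    rw [Real.cos_eq_tsum]
    unfold t a
    congr 1; funext n
    rw [show (2*0+2*n) = 2*n by ring, show (0+n).choose 0 = 1 from Nat.choose_zero_right _]
    have h1 : ((π:ℝ)/2)^(2*n) = (π^2/4)^n := by
      rw [pow_mul]; congr 1; ring
    rw [h1, show ((-1:ℝ))^n * (π^2/4)^n = (-(π^2)/4)^n by rw [← mul_pow]; congr 1; ring]
    push_cast; ring
  rw [this, Real.cos_pi_div_two]

lemma pi_sq_lt : π^2 < 9.9225 := by
  nlinarith [Real.pi_lt_d2, Real.pi_pos]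

lemma q_lt_one {j : ℕ} (hj : 1 ≤ j) : π^2 / (4*(2*(j:ℝ)+1)) < 1 := by
  have h12 : (12:ℝ) ≤ 4*(2*(j:ℝ)+1) := by
    have : (1:ℝ) ≤ j := by exact_mod_cast hj
    nlinarith
  have hpos : (0:ℝ) < 4*(2*(j:ℝ)+1) := by positivity
  rw [div_lt_one hpos]
  nlinarith [pi_sq_lt]

lemma t_err {j : ℕ} (hj : 1 ≤ j) :
    |t j - 1 / (Nat.factorial (2*j))| ≤
      (1 / (Nat.factorial (2*j))) * ((π^2/(4*(2*(j:ℝ)+1))) / (1 - π^2/(4*(2*(j:ℝ)+1)))) := by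
  set q : ℝ := π^2/(4*(2*(j:ℝ)+1)) with hqdef
  have hq0 : 0 ≤ q := by positivity
  have hq1 : q < 1 := q_lt_one hj
  have ha0 : a j 0 = 1 / (Nat.factorial (2*j)) := by
    unfold a; simp
  have hsum := summable_a j
  have hsplit : t j = a j 0 + ∑' k, a j (k+1) := by
    unfold t; exact Summable.tsum_eq_zero_add hsum
  rw [hsplit, ha0, add_sub_cancel_left]
  have hb : ∀ k, |a j (k+1)| ≤ (1 / (Nat.factorial (2*j)) * q) * q^k := by
    intro k
    calc |a j (k+1)| ≤ (1 / (Nat.factorial (2*j))) * q^(k+1) := abs_a_le j (k+1)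
      _ = (1 / (Nat.factorial (2*j)) * q) * q^k := by rw [pow_succ]; ring
  have hshift : Summable (fun k => a j (k+1)) := (summable_nat_add_iff 1).mpr hsum
  have habs : |∑' k, a j (k+1)| ≤ ∑' k, |a j (k+1)| := by
    have := norm_tsum_le_tsum_norm (f := fun k => a j (k+1))
      (by simpa only [Real.norm_eq_abs] using hshift.abs)
    simpa only [Real.norm_eq_abs] using this
  calc |∑' k, a j (k+1)| ≤ ∑' k, |a j (k+1)| := habs
    _ ≤ ∑' k : ℕ, (1 / (Nat.factorial (2*j)) * q) * q^k :=
        Summable.tsum_le_tsum hb hshift.abs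
          ((summable_geometric_of_lt_one hq0 hq1).mul_left _)
    _ = (1 / (Nat.factorial (2*j)) * q) * (1-q)⁻¹ := by
        rw [tsum_mul_left, tsum_geometric_of_lt_one hq0 hq1]
    _ = (1 / (Nat.factorial (2*j))) * (q / (1-q)) := by
        rw [div_eq_mul_inv]; ring

lemma abs_t_le (j : ℕ) : |t j| ≤ 6 / (Nat.factorial (2*j)) := by
  rcases Nat.eq_zero_or_pos j with h | h
  · subst h; rw [t_zero, abs_zero]; positivity
  · have herr := t_err h
    set q : ℝ := π^2/(4*(2*(j:ℝ)+1)) with hqdef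
    have hq1 : q < 1 := q_lt_one h
    have hq2 : q ≤ π^2/12 := by
      apply div_le_div_of_nonneg_left (by positivity) (by norm_num)
      have : (1:ℝ) ≤ j := by exact_mod_cast h
      nlinarith
    have hqb : q ≤ 0.83 := by nlinarith [pi_sq_lt]
    have hq0 : 0 ≤ q := by positivity
    have hfac : (0:ℝ) < 1 / (Nat.factorial (2*j)) := by positivity
    have : q / (1-q) ≤ 5 := by
      rw [div_le_iff₀ (by linarith)]
      nlinarith
    calc |t j| ≤ |t j - 1 / (Nat.factorial (2*j))| + |1 / ((Nat.factorial (2*j)):ℝ)| := by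
          have := abs_add_le (t j - 1 / ((Nat.factorial (2*j)):ℝ)) (1 / ((Nat.factorial (2*j)):ℝ))
          simpa using this
      _ ≤ (1 / (Nat.factorial (2*j))) * 5 + 1 / (Nat.factorial (2*j)) := by
          rw [abs_of_pos hfac]
          have := mul_le_mul_of_nonneg_left this (le_of_lt hfac)
          nlinarith
      _ = 6 / (Nat.factorial (2*j)) := by ring

noncomputable def F (u : ℝ) (p : ℕ × ℕ) : ℝ := a p.1 p.2 * π ^ (2 * p.1) * u ^ p.1

lemma sum_antidiagonal_F (u : ℝ) (n : ℕ) :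
    ∑ p ∈ Finset.HasAntidiagonal.antidiagonal n, F u p = (π^2*u + -(π^2)/4)^n / Nat.factorial (2*n) := by
  rw [Finset.Nat.sum_antidiagonal_eq_sum_range_succ_mk, add_pow, Finset.sum_div]
  apply Finset.sum_congr rfl
  intro i hi
  have hin : i ≤ n := Nat.lt_succ_iff.mp (Finset.mem_range.mp hi)
  unfold F a
  simp only
  rw [show 2*i + 2*(n-i) = 2*n by omega, show i + (n-i) = n by omega]
  rw [show (π^2*u)^i = π^(2*i) * u^i by rw [mul_pow, ← pow_mul]]
  ring

lemma sum_antidiagonal_absF (u : ℝ) (n : ℕ) :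
    ∑ p ∈ Finset.HasAntidiagonal.antidiagonal n, |F u p| = (π^2*|u| + π^2/4)^n / Nat.factorial (2*n) := by
  rw [Finset.Nat.sum_antidiagonal_eq_sum_range_succ_mk, add_pow, Finset.sum_div]
  apply Finset.sum_congr rfl
  intro i hi
  have hin : i ≤ n := Nat.lt_succ_iff.mp (Finset.mem_range.mp hi)
  unfold F a
  simp only
  rw [show 2*i + 2*(n-i) = 2*n by omega, show i + (n-i) = n by omega]
  have h3 : |(-(π ^ 2) / 4 : ℝ)| = π^2/4 := by
    rw [abs_div, abs_neg]
    simp [abs_of_nonneg (show (0:ℝ) ≤ π^2 by positivity)]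
  simp only [abs_mul, abs_div, abs_pow, h3, abs_of_pos pi_pos, Nat.abs_cast]
  rw [show (π^2*|u|)^i = π^(2*i) * |u|^i by rw [mul_pow, ← pow_mul]]
  ring

lemma summable_absF (u : ℝ) : Summable (fun p : ℕ × ℕ => |F u p|) := by
  rw [← Finset.HasAntidiagonal.sigmaAntidiagonalEquivProd.summable_iff]
  apply (summable_sigma_of_nonneg (fun _ => abs_nonneg _)).mpr
  refine ⟨fun n => Summable.of_finite, ?_⟩
  have hb : Summable (fun n : ℕ => (π^2*|u| + π^2/4)^n / Nat.factorial (2*n)) := by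
    apply Summable.of_nonneg_of_le (fun n => by positivity) _
      (Real.summable_pow_div_factorial (π^2*|u|+π^2/4))
    intro n
    apply div_le_div_of_nonneg_left (by positivity) (by positivity)
    exact_mod_cast Nat.factorial_le (show n ≤ 2*n by omega)
  apply hb.congr
  intro n
  exact ((Finset.tsum_subtype _ _).trans (sum_antidiagonal_absF u n)).symm

lemma summable_F (u : ℝ) : Summable (F u) := summable_abs_iff.mp (summable_absF u)

lemma cos_eq_tsum_t (x : ℝ) :
    Real.cos (π * x) = ∑' j : ℕ, t j * π ^ (2 * j) * (1/4 - x^2)^j := by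
  set u : ℝ := 1/4 - x^2 with hu
  have hsumF : Summable (F u) := summable_F u
  have h1 : ∑' p : ℕ × ℕ, F u p = ∑' j : ℕ, t j * π ^ (2*j) * u^j := by
    rw [Summable.tsum_prod hsumF]
    congr 1; funext j
    unfold F t
    simp only
    rw [tsum_mul_right, tsum_mul_right]
  have h2 : ∑' p : ℕ × ℕ, F u p = Real.cos (π * x) := by
    rw [← Finset.HasAntidiagonal.sigmaAntidiagonalEquivProd.tsum_eq (F u),
      Summable.tsum_sigma (f := fun c => F u (Finset.HasAntidiagonal.sigmaAntidiagonalEquivProd c))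
        (Finset.HasAntidiagonal.sigmaAntidiagonalEquivProd.summable_iff.mpr hsumF)]
    have h3 : ∀ n : ℕ, (∑' p : (Finset.HasAntidiagonal.antidiagonal n : Finset (ℕ×ℕ)),
        F u ((Finset.HasAntidiagonal.sigmaAntidiagonalEquivProd) ⟨n, p⟩))
        = (-1)^n * (π*x)^(2*n) / Nat.factorial (2*n) := by
      intro n
      refine (Finset.tsum_subtype _ _).trans ?_
      rw [sum_antidiagonal_F]
      congr 1
      rw [show π^2*u + -(π^2)/4 = -((π*x)^2) by rw [hu]; ring]
      rw [neg_pow, ← pow_mul, mul_comm 2 n]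
    rw [tsum_congr h3]
    exact (Real.hasSum_cos (π*x)).tsum_eq
  rw [← h2, h1]

lemma c_abs_le (j : ℕ) {u : ℝ} (h0 : 0 ≤ u) :
    |t j * π ^ (2 * j) * u ^ j| ≤ 6 * (π ^ 2 * u) ^ j / Nat.factorial (2 * j) := by
  have h1 : |t j * π ^ (2 * j) * u ^ j| = |t j| * (π ^ 2 * u) ^ j := by
    rw [abs_mul, abs_mul, abs_pow, abs_pow, abs_of_pos pi_pos, abs_of_nonneg h0,
      mul_pow, ← pow_mul]
    ring
  rw [h1]
  calc |t j| * (π ^ 2 * u) ^ j ≤ (6 / Nat.factorial (2 * j)) * (π ^ 2 * u) ^ j :=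
        mul_le_mul_of_nonneg_right (abs_t_le j) (by positivity)
    _ = 6 * (π ^ 2 * u) ^ j / Nat.factorial (2 * j) := by ring

lemma summable_c {u : ℝ} (h0 : 0 ≤ u) (h1 : u ≤ 1 / 4) :
    Summable (fun j : ℕ => t j * π ^ (2 * j) * u ^ j) := by
  apply Summable.of_norm_bounded ((Real.summable_pow_div_factorial (π ^ 2 / 4)).mul_left 6)
  intro j
  have h2 : (π ^ 2 * u) ^ j ≤ (π ^ 2 / 4) ^ j := by
    apply pow_le_pow_left₀ (by positivity)
    nlinarith [sq_nonneg π, pi_pos]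
  have h3 : (Nat.factorial j : ℝ) ≤ (Nat.factorial (2 * j) : ℝ) := by
    exact_mod_cast Nat.factorial_le (show j ≤ 2 * j by omega)
  have h4 : (0:ℝ) < Nat.factorial j := by positivity
  have h5 : (0:ℝ) < Nat.factorial (2 * j) := by positivity
  calc ‖t j * π ^ (2 * j) * u ^ j‖ ≤ 6 * (π ^ 2 * u) ^ j / Nat.factorial (2 * j) :=
        c_abs_le j h0
    _ ≤ 6 * (π ^ 2 / 4) ^ j / Nat.factorial j := by
        apply div_le_div₀ (by positivity) (by nlinarith) h4 h3
    _ = 6 * ((π ^ 2 / 4) ^ j / Nat.factorial j) := by ring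

set_option maxHeartbeats 1600000 in
/-- `δ_m(x) := cos(πx) − P_m(x)` is asymptotic to
`δ_m*(x) := π^{2m+2}(1/4−x²)^{m+1}/(2m+2)!` as `m → ∞`, uniformly in `x ∈ (−1/2, 1/2)`. -/
theorem delta_asymp_uniform :
    ∀ ε > (0 : ℝ), ∃ M : ℕ, ∀ m : ℕ, M ≤ m → ∀ x : ℝ, -(1 / 2) < x → x < 1 / 2 →
      |(Real.cos (π * x) - P m x) -
          π ^ (2 * m + 2) * (1 / 4 - x ^ 2) ^ (m + 1) / (Nat.factorial (2 * m + 2))| ≤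
        ε * (π ^ (2 * m + 2) * (1 / 4 - x ^ 2) ^ (m + 1) / (Nat.factorial (2 * m + 2))) := by
  intro ε hε
  refine ⟨⌈(16:ℝ)/ε⌉₊ + 5, fun m hm x hx1 hx2 => ?_⟩
  set u : ℝ := 1/4 - x^2 with hu
  have hu0 : 0 < u := by rw [hu]; nlinarith
  have hu4 : u ≤ 1/4 := by rw [hu]; nlinarith [sq_nonneg x]
  have hm5 : 5 ≤ m := by omega
  have hs5 : (5:ℝ) ≤ (m:ℝ) := by exact_mod_cast hm5
  have hms : (16:ℝ)/ε ≤ (m:ℝ) := by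
    calc (16:ℝ)/ε ≤ (⌈(16:ℝ)/ε⌉₊ : ℝ) := Nat.le_ceil _
      _ ≤ (m:ℝ) := by exact_mod_cast le_trans (by omega) hm
  have hme : (16:ℝ) ≤ m * ε := by
    rw [div_le_iff₀ hε] at hms; linarith
  set B : ℝ := π^2 * u with hB
  have hB0 : 0 < B := by positivity
  have hB4 : B ≤ π^2/4 := by rw [hB]; nlinarith [sq_nonneg π, pi_pos]
  set c : ℕ → ℝ := fun j => t j * π ^ (2*j) * u ^ j with hc
  have hsc : Summable c := summable_c hu0.le hu4
  have hcos : Real.cos (π * x) = ∑' j, c j := cos_eq_tsum_t x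
  have hP : P m x = ∑ i ∈ Finset.range (m+1), c i := by
    rw [Finset.range_eq_Ico, Finset.sum_eq_sum_Ico_succ_bot (by omega)]
    have hc0 : c 0 = 0 := by simp [hc, t_zero]
    rw [hc0, zero_add, Finset.Ico_add_one_right_eq_Icc]
    rfl
  have hsplit : Real.cos (π * x) - P m x = ∑' d, c (d + (m+1)) := by
    rw [hcos, hP, ← Summable.sum_add_tsum_nat_add (m+1) hsc]; ring
  set D : ℝ := π ^ (2*m+2) * u ^ (m+1) / Nat.factorial (2*m+2) with hD
  have hDB : D = B^(m+1) / Nat.factorial (2*m+2) := by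
    rw [hD, hB, mul_pow, ← pow_mul]
    ring_nf
  have hD0 : 0 < D := by rw [hD]; positivity
  have hsc1 : Summable (fun d => c (d + (m+1))) := (summable_nat_add_iff (m+1)).mpr hsc
  have hsplit2 : ∑' d, c (d + (m+1)) = c (m+1) + ∑' d, c (d + (m+2)) := by
    rw [Summable.tsum_eq_zero_add hsc1]
    congr 1
    · norm_num
    · apply tsum_congr; intro d; congr 1; omega
  set q : ℝ := π^2 / (4*(2*(m:ℝ)+3)) with hqd
  set r : ℝ := (π^2/4) / (2*(m:ℝ)+3)^2 with hrd
  have hq0 : 0 < q := by positivity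
  have hr0 : 0 < r := by positivity
  have hpisq : π^2 < 10 := by nlinarith [pi_sq_lt]
  have hql : q ≤ 1/4 := by
    rw [hqd, div_le_iff₀ (by positivity)]; nlinarith
  have hrq : r = q / (2*(m:ℝ)+3) := by
    rw [hrd, hqd]; field_simp
  have hrl : r ≤ 1/4 := by
    rw [hrq]
    calc q / (2*(m:ℝ)+3) ≤ q / 1 := by
          apply div_le_div_of_nonneg_left hq0.le one_pos ?_ |>.trans le_rfl
          linarith
      _ = q := div_one q
      _ ≤ 1/4 := hql
  -- head bound
  have hq' := t_err (j := m+1) (by omega)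
  have harg : (2*(((m+1):ℕ):ℝ)+1) = 2*(m:ℝ)+3 := by push_cast; ring
  rw [harg] at hq'
  rw [show 2*(m+1) = 2*m+2 by ring] at hq'
  have hcm : c (m+1) = t (m+1) * B^(m+1) := by
    rw [hc, hB]
    simp only
    rw [mul_pow, ← pow_mul, mul_assoc]
  have headb : |c (m+1) - D| ≤ D * (q/(1-q)) := by
    have he : c (m+1) - D = (t (m+1) - 1/(Nat.factorial (2*m+2))) * B^(m+1) := by
      rw [hcm, hDB]; ring
    rw [he, abs_mul, abs_of_nonneg (by positivity : (0:ℝ) ≤ B^(m+1))]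
    calc |t (m+1) - 1/(Nat.factorial (2*m+2))| * B^(m+1)
        ≤ (1/(Nat.factorial (2*m+2)) * (q/(1-q))) * B^(m+1) :=
          mul_le_mul_of_nonneg_right hq' (by positivity)
      _ = D * (q/(1-q)) := by rw [hDB]; ring
  -- tail term bound
  have htermb : ∀ d : ℕ, |c (d + (m+2))| ≤ (6*D*r) * r^d := by
    intro d
    have h1 : |c (d+(m+2))| ≤ 6 * B^(d+(m+2)) / Nat.factorial (2*(d+(m+2))) := c_abs_le _ hu0.le
    refine h1.trans ?_
    have hfac : ((Nat.factorial (2*m+2)):ℝ) * (2*(m:ℝ)+3)^(2*(d+1)) ≤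
        ((Nat.factorial (2*(d+(m+2)))):ℝ) := by
      have h := Nat.factorial_mul_pow_le_factorial (m := 2*m+2) (n := 2*(d+1))
      rw [show (2*m+2) + 2*(d+1) = 2*(d+(m+2)) by ring] at h
      exact_mod_cast h
    have hBd : B^(d+1) ≤ (π^2/4)^(d+1) := pow_le_pow_left₀ hB0.le hB4 _
    have key2 : (π^2/4)^(d+1) * ((Nat.factorial (2*m+2)):ℝ) ≤
        r^(d+1) * ((Nat.factorial (2*(d+(m+2)))):ℝ) := by
      have hrp : r^(d+1) = (π^2/4)^(d+1) / (2*(m:ℝ)+3)^(2*(d+1)) := by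
        rw [hrd, div_pow, ← pow_mul]
      rw [hrp, div_mul_eq_mul_div, le_div_iff₀ (by positivity)]
      calc (π^2/4)^(d+1) * ((Nat.factorial (2*m+2)):ℝ) * (2*(m:ℝ)+3)^(2*(d+1))
          = (π^2/4)^(d+1) * (((Nat.factorial (2*m+2)):ℝ) * (2*(m:ℝ)+3)^(2*(d+1))) := by ring
        _ ≤ (π^2/4)^(d+1) * ((Nat.factorial (2*(d+(m+2)))):ℝ) :=
            mul_le_mul_of_nonneg_left hfac (by positivity)
        _ = (π^2/4)^(d+1) * ((Nat.factorial (2*(d+(m+2)))):ℝ) := rfl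
    have key : B^(d+1) * ((Nat.factorial (2*m+2)):ℝ) ≤
        r^(d+1) * ((Nat.factorial (2*(d+(m+2)))):ℝ) :=
      (mul_le_mul_of_nonneg_right hBd (by positivity)).trans key2
    have hdiv : B^(d+1)/((Nat.factorial (2*(d+(m+2)))):ℝ) ≤
        r^(d+1)/((Nat.factorial (2*m+2)):ℝ) := by
      rw [div_le_div_iff₀ (by positivity) (by positivity)]
      exact key
    have hBsplit : B^(d+(m+2)) = B^(m+1) * B^(d+1) := by rw [← pow_add]; ring_nf
    calc 6 * B^(d+(m+2)) / Nat.factorial (2*(d+(m+2)))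
        = (6*B^(m+1)) * (B^(d+1)/((Nat.factorial (2*(d+(m+2)))):ℝ)) := by
          rw [hBsplit]; ring
      _ ≤ (6*B^(m+1)) * (r^(d+1)/((Nat.factorial (2*m+2)):ℝ)) :=
          mul_le_mul_of_nonneg_left hdiv (by positivity)
      _ = (6*D*r) * r^d := by rw [hDB, pow_succ]; ring
  -- tail sum bound
  have htails : Summable (fun d => c (d + (m+2))) := (summable_nat_add_iff (m+2)).mpr hsc
  have hr1 : r < 1 := lt_of_le_of_lt hrl (by norm_num)
  have hgeo : Summable (fun d : ℕ => (6*D*r) * r^d) :=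
    (summable_geometric_of_lt_one hr0.le hr1).mul_left _
  have htail : |∑' d, c (d + (m+2))| ≤ (6*D*r) * (1-r)⁻¹ := by
    have habs : |∑' d, c (d + (m+2))| ≤ ∑' d, |c (d + (m+2))| := by
      have := norm_tsum_le_tsum_norm (f := fun d => c (d + (m+2)))
        (by simpa only [Real.norm_eq_abs] using htails.abs)
      simpa only [Real.norm_eq_abs] using this
    calc |∑' d, c (d + (m+2))| ≤ ∑' d, |c (d + (m+2))| := habs
      _ ≤ ∑' d : ℕ, (6*D*r) * r^d := Summable.tsum_le_tsum htermb htails.abs hgeo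
      _ = (6*D*r) * (1-r)⁻¹ := by
          rw [tsum_mul_left, tsum_geometric_of_lt_one hr0.le hr1]
  -- assemble
  have hLHS : |(Real.cos (π*x) - P m x) - D| ≤ D * (q/(1-q)) + (6*D*r) * (1-r)⁻¹ := by
    rw [hsplit, hsplit2]
    have e1 : c (m+1) + (∑' d, c (d + (m+2))) - D
        = (c (m+1) - D) + (∑' d, c (d + (m+2))) := by ring
    rw [e1]
    calc |(c (m+1) - D) + (∑' d, c (d + (m+2)))|
        ≤ |c (m+1) - D| + |∑' d, c (d + (m+2))| := abs_add_le _ _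
      _ ≤ D * (q/(1-q)) + (6*D*r) * (1-r)⁻¹ := add_le_add headb htail
  refine hLHS.trans ?_
  have hnum : q/(1-q) + 6*r*(1-r)⁻¹ ≤ ε := by
    have h1 : q/(1-q) ≤ 2*q := by
      rw [div_le_iff₀ (by linarith : (0:ℝ) < 1-q)]
      nlinarith
    have h2 : 6*r*(1-r)⁻¹ ≤ 8*r := by
      rw [mul_comm (6*r) _, ← div_eq_inv_mul, div_le_iff₀ (by linarith : (0:ℝ) < 1-r)]
      nlinarith
    have h3 : q ≤ ε/4 := by
      rw [hqd, div_le_div_iff₀ (by positivity) (by norm_num : (0:ℝ) < 4)]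
      nlinarith
    have h4 : r ≤ q/13 := by
      rw [hrq]
      apply div_le_div_of_nonneg_left hq0.le (by norm_num)
      linarith
    have h5 : 8*r ≤ q := by nlinarith [h4, hq0.le]
    linarith
  calc D * (q/(1-q)) + (6*D*r) * (1-r)⁻¹ = D * (q/(1-q) + 6*r*(1-r)⁻¹) := by ring
    _ ≤ D * ε := mul_le_mul_of_nonneg_left hnum hD0.le
    _ = ε * D := mul_comm _ _
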